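/- arXiv:2202.12697 — 2 statements merged into one kernel-verified Lean document; each statement's English description precedes it below -/
import Mathlib

section
/- For all parameters A, B, C ∈ ℂ with (C;q)_n ≠ 0 for all n, and all x, y ∈ ℂ with |x| < 1 and |y| < 1, the bibasic Humbert function satisfies Φ₁(A,B;qC;q,q₁;x,y) = C·Φ₁(A,B;qC;q,q₁;qx,qy) + (1−C)·Φ₁(A,B;C;q,q₁;x,y). (Equation (2.6), with C = q^c.) -/
open Complex

/-- The q-shifted factorial (z;q)_n = prod_{r=0}^{n-1} (1 - z q^r). -/
noncomputable def qPoch (q z : ℂ) (n : ℕ) : ℂ :=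
  ∏ r ∈ Finset.range n, (1 - z * q ^ r)

/-- The bibasic Humbert hypergeometric function Φ₁ on two independent bases q and q₁. -/
noncomputable def Phi1 (q q1 A B C x y : ℂ) : ℂ :=
  ∑' p : ℕ × ℕ,
    qPoch q A (p.1 + p.2) * qPoch q1 B p.1 /
      (qPoch q C (p.1 + p.2) * qPoch q1 q1 p.1 * qPoch q q p.2) * x ^ p.1 * y ^ p.2

/-- The Jackson p-derivative. -/
noncomputable def jackson (p : ℂ) (f : ℂ → ℂ) (x : ℂ) : ℂ :=
  (f x - f (p * x)) / ((1 - p) * x)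

/- ### Auxiliary lemmas -/

/-- The complex absolute value, as a bundled absolute value given by the norm. -/
noncomputable def Complex.abs : AbsoluteValue ℂ ℝ :=
  IsAbsoluteValue.toAbsoluteValue (norm : ℂ → ℝ)

lemma Complex.norm_eq_abs (z : ℂ) : ‖z‖ = Complex.abs z := rfl

lemma aux_one_sub_sum_le_prod (s : Finset ℕ) (t : ℕ → ℝ) (h0 : ∀ r ∈ s, 0 ≤ t r)
    (h1 : ∀ r ∈ s, t r ≤ 1) :
    1 - ∑ r ∈ s, t r ≤ ∏ r ∈ s, (1 - t r) := by
  classical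
  induction s using Finset.induction_on with
  | empty => simp
  | insert a s ha ih =>
    rw [Finset.sum_insert ha, Finset.prod_insert ha]
    have h0a : 0 ≤ t a := h0 a (Finset.mem_insert_self a s)
    have h1a : t a ≤ 1 := h1 a (Finset.mem_insert_self a s)
    have ih' := ih (fun r hr => h0 r (Finset.mem_insert_of_mem hr))
      (fun r hr => h1 r (Finset.mem_insert_of_mem hr))
    have hs0 : 0 ≤ ∑ r ∈ s, t r := Finset.sum_nonneg fun r hr => h0 r (Finset.mem_insert_of_mem hr)
    nlinarith [mul_le_mul_of_nonneg_left ih' (by linarith : (0:ℝ) ≤ 1 - t a)]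

/-- Uniform upper bound on |(z;q)_n|. -/
lemma qPoch_abs_le (q z : ℂ) (hq : Complex.abs q < 1) (n : ℕ) :
    Complex.abs (qPoch q z n) ≤ Real.exp (Complex.abs z * (1 - Complex.abs q)⁻¹) := by
  have hq0 : (0:ℝ) ≤ Complex.abs q := AbsoluteValue.nonneg _ _
  have h1q : (0:ℝ) < 1 - Complex.abs q := by linarith
  calc Complex.abs (qPoch q z n)
      = ∏ r ∈ Finset.range n, Complex.abs (1 - z * q ^ r) := by
        rw [qPoch, map_prod]
    _ ≤ ∏ r ∈ Finset.range n, Real.exp (Complex.abs z * Complex.abs q ^ r) := by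
        apply Finset.prod_le_prod (fun r _ => AbsoluteValue.nonneg _ _)
        intro r _
        have h1 : Complex.abs (1 - z * q ^ r) ≤ 1 + Complex.abs (z * q ^ r) := by
          calc Complex.abs (1 - z * q ^ r) ≤ Complex.abs 1 + Complex.abs (z * q ^ r) :=
                AbsoluteValue.sub_le_add _ _ _
            _ = 1 + Complex.abs (z * q ^ r) := by simp
        have h2 : Complex.abs (z * q ^ r) = Complex.abs z * Complex.abs q ^ r := by
          rw [map_mul, map_pow]
        rw [h2] at h1
        refine h1.trans ?_
        have := Real.add_one_le_exp (Complex.abs z * Complex.abs q ^ r)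
        linarith
    _ = Real.exp (∑ r ∈ Finset.range n, Complex.abs z * Complex.abs q ^ r) :=
        (Real.exp_sum _ _).symm
    _ ≤ Real.exp (Complex.abs z * (1 - Complex.abs q)⁻¹) := by
        apply Real.exp_le_exp.mpr
        rw [← Finset.mul_sum]
        apply mul_le_mul_of_nonneg_left ?_ (AbsoluteValue.nonneg _ _)
        calc ∑ r ∈ Finset.range n, Complex.abs q ^ r
            ≤ ∑' r : ℕ, Complex.abs q ^ r :=
              Summable.sum_le_tsum _ (fun r _ => pow_nonneg hq0 r)
                (summable_geometric_of_lt_one hq0 hq)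
          _ = (1 - Complex.abs q)⁻¹ := tsum_geometric_of_lt_one hq0 hq

/-- Uniform positive lower bound on |(z;q)_n| when all factors are nonzero. -/
lemma qPoch_abs_ge (q z : ℂ) (hq : Complex.abs q < 1)
    (hz : ∀ n, qPoch q z n ≠ 0) :
    ∃ m : ℝ, 0 < m ∧ ∀ n, m ≤ Complex.abs (qPoch q z n) := by
  have hq0 : (0:ℝ) ≤ Complex.abs q := AbsoluteValue.nonneg _ _
  have h1q : (0:ℝ) < 1 - Complex.abs q := by linarith
  -- choose N with |z| * |q|^N / (1 - |q|) ≤ 1/2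
  obtain ⟨N, hN⟩ := exists_pow_lt_of_lt_one
    (x := (1 - Complex.abs q) / (2 * (Complex.abs z + 1))) (y := Complex.abs q)
    (by positivity) hq
  have hzpos : (0:ℝ) < Complex.abs z + 1 := by positivity
  have hsum : ∀ n, ∑ r ∈ Finset.Ico N n, Complex.abs z * Complex.abs q ^ r ≤ 1/2 := by
    intro n
    calc ∑ r ∈ Finset.Ico N n, Complex.abs z * Complex.abs q ^ r
        = ∑ i ∈ Finset.range (n - N), Complex.abs z * Complex.abs q ^ N * Complex.abs q ^ i := by
          rw [Finset.sum_Ico_eq_sum_range]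
          apply Finset.sum_congr rfl
          intro i _
          rw [pow_add]; ring
      _ ≤ ∑' i : ℕ, Complex.abs z * Complex.abs q ^ N * Complex.abs q ^ i := by
          apply Summable.sum_le_tsum _ (fun i _ => by positivity)
          exact (summable_geometric_of_lt_one hq0 hq).mul_left _
      _ = Complex.abs z * Complex.abs q ^ N * (1 - Complex.abs q)⁻¹ := by
          rw [tsum_mul_left, tsum_geometric_of_lt_one hq0 hq]
      _ ≤ 1/2 := by
          have h4 : Complex.abs q ^ N * (2 * (Complex.abs z + 1)) < 1 - Complex.abs q :=
            (lt_div_iff₀ (by positivity)).mp hN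
          rw [inv_eq_one_div, mul_one_div, div_le_div_iff₀ h1q (by norm_num : (0:ℝ) < 2)]
          nlinarith [pow_nonneg hq0 N, AbsoluteValue.nonneg Complex.abs z]
  -- each |z| |q|^r for r ≥ N is ≤ 1/2 ≤ 1
  have hterm : ∀ r, N ≤ r → Complex.abs z * Complex.abs q ^ r ≤ 1/2 := by
    intro r hr
    have := hsum (r + 1)
    have hmem : r ∈ Finset.Ico N (r + 1) := Finset.mem_Ico.mpr ⟨hr, Nat.lt_succ_self r⟩
    have h5 := Finset.single_le_sum (f := fun i => Complex.abs z * Complex.abs q ^ i)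
      (fun i _ => by positivity) hmem
    linarith
  -- the minimum over n ≤ N
  have hne : (Finset.range (N + 1)).Nonempty := Finset.nonempty_range_add_one
  set m0 := (Finset.range (N + 1)).inf' hne (fun n => Complex.abs (qPoch q z n)) with hm0
  have hm0pos : 0 < m0 := by
    rw [Finset.lt_inf'_iff]
    intro n _
    exact AbsoluteValue.pos _ (hz n)
  refine ⟨m0 / 2, by positivity, fun n => ?_⟩
  by_cases hn : n ≤ N
  · have : m0 ≤ Complex.abs (qPoch q z n) :=
      Finset.inf'_le _ (Finset.mem_range.mpr (Nat.lt_succ_of_le hn))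
    linarith
  · push_neg at hn
    have hNn : N ≤ n := le_of_lt hn
    have hsplit : qPoch q z n = qPoch q z N * ∏ r ∈ Finset.Ico N n, (1 - z * q ^ r) := by
      rw [qPoch, qPoch, Finset.range_eq_Ico, Finset.range_eq_Ico]
      exact (Finset.prod_Ico_consecutive _ (Nat.zero_le N) hNn).symm
    have htail : (1:ℝ)/2 ≤ Complex.abs (∏ r ∈ Finset.Ico N n, (1 - z * q ^ r)) := by
      rw [map_prod]
      calc (1:ℝ)/2 ≤ 1 - ∑ r ∈ Finset.Ico N n, Complex.abs z * Complex.abs q ^ r := by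
            linarith [hsum n]
        _ ≤ ∏ r ∈ Finset.Ico N n, (1 - Complex.abs z * Complex.abs q ^ r) := by
            apply aux_one_sub_sum_le_prod
            · intro r _; positivity
            · intro r hr
              have := hterm r (Finset.mem_Ico.mp hr).1
              linarith
        _ ≤ ∏ r ∈ Finset.Ico N n, Complex.abs (1 - z * q ^ r) := by
            apply Finset.prod_le_prod
            · intro r hr
              have := hterm r (Finset.mem_Ico.mp hr).1
              linarith
            · intro r hr
              have h1 := norm_sub_norm_le (1:ℂ) (z * q ^ r)
              simp only [Complex.norm_eq_abs, map_one, map_mul, map_pow] at h1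
              linarith
    have hNle : m0 ≤ Complex.abs (qPoch q z N) :=
      Finset.inf'_le _ (Finset.mem_range.mpr (Nat.lt_succ_self N))
    rw [hsplit, map_mul]
    calc m0 / 2 = m0 * (1/2) := by ring
      _ ≤ Complex.abs (qPoch q z N) * Complex.abs (∏ r ∈ Finset.Ico N n, (1 - z * q ^ r)) := by
          apply mul_le_mul hNle htail (by norm_num) (AbsoluteValue.nonneg _ _)

/-- The general term of Φ₁ is summable. -/
lemma phi1_summable (q q1 A B C x y : ℂ)
    (hq1 : Complex.abs q < 1) (hq11 : Complex.abs q1 < 1)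
    (hC : ∀ n, qPoch q C n ≠ 0)
    (hq1ne : ∀ n, qPoch q1 q1 n ≠ 0) (hqne : ∀ n, qPoch q q n ≠ 0)
    (hx : Complex.abs x < 1) (hy : Complex.abs y < 1) :
    Summable fun p : ℕ × ℕ =>
      qPoch q A (p.1 + p.2) * qPoch q1 B p.1 /
        (qPoch q C (p.1 + p.2) * qPoch q1 q1 p.1 * qPoch q q p.2) * x ^ p.1 * y ^ p.2 := by
  obtain ⟨mC, hmC, hmCle⟩ := qPoch_abs_ge q C hq1 hC
  obtain ⟨m1, hm1, hm1le⟩ := qPoch_abs_ge q1 q1 hq11 hq1ne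
  obtain ⟨mq, hmq, hmqle⟩ := qPoch_abs_ge q q hq1 hqne
  set MA := Real.exp (Complex.abs A * (1 - Complex.abs q)⁻¹) with hMA
  set MB := Real.exp (Complex.abs B * (1 - Complex.abs q1)⁻¹) with hMB
  have hMApos : 0 < MA := Real.exp_pos _
  have hMBpos : 0 < MB := Real.exp_pos _
  set K := MA * MB / (mC * m1 * mq) with hK
  have hKpos : 0 < K := by positivity
  apply Summable.of_norm
  have hxs : Summable fun n : ℕ => Complex.abs x ^ n :=
    summable_geometric_of_lt_one (AbsoluteValue.nonneg _ _) hx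
  have hys : Summable fun n : ℕ => Complex.abs y ^ n :=
    summable_geometric_of_lt_one (AbsoluteValue.nonneg _ _) hy
  have hgeo : Summable fun p : ℕ × ℕ => Complex.abs x ^ p.1 * Complex.abs y ^ p.2 :=
    Summable.mul_of_nonneg hxs hys (fun n => by positivity) (fun n => by positivity)
  refine Summable.of_nonneg_of_le (f := fun p : ℕ × ℕ =>
      K * (Complex.abs x ^ p.1 * Complex.abs y ^ p.2))
    (fun p => norm_nonneg _) ?_ (hgeo.mul_left K)
  · intro p
    obtain ⟨l, k⟩ := p
    simp only [Complex.norm_eq_abs, map_mul, map_div₀, map_pow]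
    have hnum : Complex.abs (qPoch q A (l + k)) * Complex.abs (qPoch q1 B l) ≤ MA * MB := by
      apply mul_le_mul (qPoch_abs_le q A hq1 _) (qPoch_abs_le q1 B hq11 _)
        (AbsoluteValue.nonneg _ _) (le_of_lt hMApos)
    have hden : mC * m1 * mq ≤
        Complex.abs (qPoch q C (l + k)) * Complex.abs (qPoch q1 q1 l) *
          Complex.abs (qPoch q q k) := by
      apply mul_le_mul (mul_le_mul (hmCle _) (hm1le _) (le_of_lt hm1)
        (AbsoluteValue.nonneg _ _)) (hmqle _) (le_of_lt hmq) (by positivity)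
    have hdiv : Complex.abs (qPoch q A (l + k)) * Complex.abs (qPoch q1 B l) /
        (Complex.abs (qPoch q C (l + k)) * Complex.abs (qPoch q1 q1 l) *
          Complex.abs (qPoch q q k)) ≤ K := by
      rw [hK]
      apply div_le_div₀ (by positivity) hnum (by positivity) hden
    calc Complex.abs (qPoch q A (l + k)) * Complex.abs (qPoch q1 B l) /
          (Complex.abs (qPoch q C (l + k)) * Complex.abs (qPoch q1 q1 l) *
            Complex.abs (qPoch q q k)) * Complex.abs x ^ l * Complex.abs y ^ k
        ≤ K * Complex.abs x ^ l * Complex.abs y ^ k := by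
          apply mul_le_mul_of_nonneg_right (mul_le_mul_of_nonneg_right hdiv (by positivity))
            (by positivity)
      _ = K * (Complex.abs x ^ l * Complex.abs y ^ k) := by ring

/-- Key finite-product identity: (C;q)_n (1 - C q^n) = (1 - C)(qC;q)_n. -/
lemma qPoch_shift (q C : ℂ) (n : ℕ) :
    qPoch q C n * (1 - C * q ^ n) = (1 - C) * qPoch q (q * C) n := by
  have h1 : qPoch q C (n + 1) = qPoch q C n * (1 - C * q ^ n) := by
    rw [qPoch, qPoch, Finset.prod_range_succ]
  have h2 : qPoch q C (n + 1) = (1 - C) * qPoch q (q * C) n := by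
    rw [qPoch, qPoch, Finset.prod_range_succ']
    simp only [pow_zero, mul_one]
    rw [mul_comm]
    congr 1
    apply Finset.prod_congr rfl
    intro r _
    ring
  rw [← h1, h2]

theorem stmt5 (q q1 A B C x y : ℂ)
    (hq0 : 0 < ‖q‖) (hq1 : ‖q‖ < 1)
    (hq10 : 0 < ‖q1‖) (hq11 : ‖q1‖ < 1)
    (hC : ∀ n : ℕ, qPoch q C n ≠ 0)
    (hx : ‖x‖ < 1) (hy : ‖y‖ < 1) :
    Phi1 q q1 A B (q * C) x y =
      C * Phi1 q q1 A B (q * C) (q * x) (q * y)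
        + (1 - C) * Phi1 q q1 A B C x y := by
  -- basic nonvanishing facts
  have hfac : ∀ n : ℕ, 1 - C * q ^ n ≠ 0 := by
    intro n
    have := hC (n + 1)
    rw [qPoch, Finset.prod_range_succ] at this
    exact right_ne_zero_of_mul this
  have hCq : ∀ n : ℕ, qPoch q (q * C) n ≠ 0 := by
    intro n
    rw [qPoch]
    apply Finset.prod_ne_zero_iff.mpr
    intro r _
    have h := hfac (r + 1)
    intro hcontra
    apply h
    rw [← hcontra]
    ring_nf
  have habs_ne_one : ∀ (w : ℂ), Complex.abs w < 1 → ∀ n : ℕ, qPoch w w n ≠ 0 := by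
    intro w hw n
    rw [qPoch]
    apply Finset.prod_ne_zero_iff.mpr
    intro r _
    intro hcontra
    have h1 : w * w ^ r = 1 := by
      have := sub_eq_zero.mp hcontra
      exact this.symm
    have h2 : Complex.abs (w * w ^ r) < 1 := by
      rw [map_mul, map_pow]
      calc Complex.abs w * Complex.abs w ^ r ≤ Complex.abs w * 1 := by
            apply mul_le_mul_of_nonneg_left (pow_le_one₀ (AbsoluteValue.nonneg _ _) hw.le)
              (AbsoluteValue.nonneg _ _)
        _ = Complex.abs w := mul_one _
        _ < 1 := hw
    rw [h1, map_one] at h2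
    exact lt_irrefl 1 h2
  have hq1ne := habs_ne_one q1 hq11
  have hqne := habs_ne_one q hq1
  have hqx : Complex.abs (q * x) < 1 := by
    rw [map_mul]
    calc Complex.abs q * Complex.abs x ≤ 1 * Complex.abs x := by
          apply mul_le_mul_of_nonneg_right hq1.le (AbsoluteValue.nonneg _ _)
      _ = Complex.abs x := one_mul _
      _ < 1 := hx
  have hqy : Complex.abs (q * y) < 1 := by
    rw [map_mul]
    calc Complex.abs q * Complex.abs y ≤ 1 * Complex.abs y := by
          apply mul_le_mul_of_nonneg_right hq1.le (AbsoluteValue.nonneg _ _)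
      _ = Complex.abs y := one_mul _
      _ < 1 := hy
  -- the three term families
  set g : ℕ × ℕ → ℂ := fun p =>
    qPoch q A (p.1 + p.2) * qPoch q1 B p.1 /
      (qPoch q (q * C) (p.1 + p.2) * qPoch q1 q1 p.1 * qPoch q q p.2) *
        (q * x) ^ p.1 * (q * y) ^ p.2 with hg
  set h : ℕ × ℕ → ℂ := fun p =>
    qPoch q A (p.1 + p.2) * qPoch q1 B p.1 /
      (qPoch q C (p.1 + p.2) * qPoch q1 q1 p.1 * qPoch q q p.2) * x ^ p.1 * y ^ p.2 with hh
  have hgs : Summable g := phi1_summable q q1 A B (q * C) (q * x) (q * y) hq1 hq11 hCq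
    hq1ne hqne hqx hqy
  have hhs : Summable h := phi1_summable q q1 A B C x y hq1 hq11 hC hq1ne hqne hx hy
  -- combine
  rw [Phi1, Phi1, Phi1]
  rw [← tsum_mul_left (a := C) (f := g), ← tsum_mul_left (a := 1 - C) (f := h)]
  rw [← Summable.tsum_add (hgs.mul_left C) (hhs.mul_left (1 - C))]
  apply tsum_congr
  intro p
  obtain ⟨l, k⟩ := p
  simp only [hg, hh]
  -- termwise identity
  have hkey := qPoch_shift q C (l + k)
  have ha : qPoch q C (l + k) ≠ 0 := hC (l + k)
  have hb : qPoch q (q * C) (l + k) ≠ 0 := hCq (l + k)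
  have hcoef : (1:ℂ) / qPoch q (q * C) (l + k) =
      C * q ^ (l + k) * (1 / qPoch q (q * C) (l + k)) + (1 - C) * (1 / qPoch q C (l + k)) := by
    field_simp
    linear_combination hkey
  have expand : ∀ (P u v w : ℂ), P / (u * v * w) = P * (1 / u) * (1 / v) * (1 / w) := by
    intro P u v w; field_simp
  rw [expand, expand, mul_pow, mul_pow]
  nth_rewrite 1 [hcoef]
  ring
end

section
/- For all parameters A, B, C ∈ ℂ with (C;q)_n ≠ 0 for all n, all r ∈ ℕ, all y ∈ ℂ with |y| < 1, and all x ∈ ℂ with 0 < |x| < 1, the r-fold iterated Jackson q₁-derivative in the variable x of the function x ↦ Φ₁(A,B;C;q,q₁;x,y), evaluated at x, equals [(A;q)_r (B;q₁)_r / ((1−q₁)^r (C;q)_r)] · Φ₁(q^r A, q₁^r B; q^r C; q,q₁; x, y). (Equation (2.14).) -/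
open Complex

open Finset

lemma qPoch_succ (q z : ℂ) (n : ℕ) : qPoch q z (n+1) = qPoch q z n * (1 - z * q ^ n) :=
  Finset.prod_range_succ _ _

lemma qPoch_succ' (q z : ℂ) (n : ℕ) : qPoch q z (n+1) = (1 - z) * qPoch q (q*z) n := by
  rw [qPoch, Finset.prod_range_succ']
  simp only [pow_zero, mul_one, qPoch]
  rw [mul_comm]
  congr 1
  exact Finset.prod_congr rfl fun i _ => by ring_nf

lemma qPoch_add (q z : ℂ) (m n : ℕ) :
    qPoch q z (m + n) = qPoch q z m * qPoch q (q ^ m * z) n := by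
  rw [qPoch, Finset.prod_range_add]
  congr 1
  exact Finset.prod_congr rfl fun i _ => by ring_nf

lemma qPoch_self_ne_zero {q : ℂ} (h : ‖q‖ < 1) (n : ℕ) : qPoch q q n ≠ 0 := by
  rw [qPoch]
  apply Finset.prod_ne_zero_iff.2
  intro i _
  intro hzero
  have h1 : q * q ^ i = 1 := by linear_combination -hzero
  have : ‖q * q ^ i‖ < 1 := by
    rw [norm_mul, norm_pow]
    calc ‖q‖ * ‖q‖ ^ i ≤ ‖q‖ * 1 := by
          apply mul_le_mul_of_nonneg_left _ (norm_nonneg q)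
          exact pow_le_one₀ (norm_nonneg q) h.le
      _ < 1 := by rwa [mul_one]
  rw [h1] at this; simp at this

lemma abs_qPoch_le {q : ℂ} (hq : ‖q‖ < 1) (z : ℂ) (n : ℕ) :
    ‖qPoch q z n‖ ≤ Real.exp (‖z‖ / (1 - ‖q‖)) := by
  have hq0 : (0:ℝ) ≤ ‖q‖ := norm_nonneg q
  rw [qPoch, norm_prod]
  calc ∏ r ∈ range n, ‖1 - z * q ^ r‖
      ≤ ∏ r ∈ range n, Real.exp (‖z‖ * ‖q‖ ^ r) := by
        apply Finset.prod_le_prod (fun i _ => norm_nonneg _)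
        intro i _
        calc ‖1 - z * q ^ i‖ ≤ ‖(1:ℂ)‖ + ‖z * q ^ i‖ := by
              simpa using norm_sub_le (1:ℂ) (z * q ^ i)
          _ = ‖z‖ * ‖q‖ ^ i + 1 := by
              rw [norm_one, norm_mul, norm_pow]; ring
          _ ≤ Real.exp (‖z‖ * ‖q‖ ^ i) := Real.add_one_le_exp _
    _ = Real.exp (∑ r ∈ range n, ‖z‖ * ‖q‖ ^ r) := (Real.exp_sum _ _).symm
    _ ≤ Real.exp (‖z‖ / (1 - ‖q‖)) := by
        apply Real.exp_le_exp.2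
        rw [← Finset.mul_sum, div_eq_mul_inv]
        apply mul_le_mul_of_nonneg_left _ (norm_nonneg z)
        calc ∑ r ∈ range n, ‖q‖ ^ r ≤ ∑' r : ℕ, ‖q‖ ^ r :=
              Summable.sum_le_tsum _ (fun i _ => pow_nonneg hq0 i) (summable_geometric_of_lt_one hq0 hq)
          _ = (1 - ‖q‖)⁻¹ := tsum_geometric_of_lt_one hq0 hq

lemma prod_one_sub_ge (a : ℕ → ℝ) (n : ℕ) (ha0 : ∀ i ∈ range n, 0 ≤ a i)
    (ha1 : ∀ i ∈ range n, a i ≤ 1) :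
    1 - ∑ i ∈ range n, a i ≤ ∏ i ∈ range n, (1 - a i) := by
  induction n with
  | zero => simp
  | succ n ih =>
    have hsub : ∀ i ∈ range n, i ∈ range (n+1) := fun i hi =>
      Finset.mem_range.2 (Nat.lt_succ_of_lt (Finset.mem_range.1 hi))
    have ih' := ih (fun i hi => ha0 i (hsub i hi)) (fun i hi => ha1 i (hsub i hi))
    rw [Finset.sum_range_succ, Finset.prod_range_succ]
    have hP0 : 0 ≤ ∏ i ∈ range n, (1 - a i) :=
      Finset.prod_nonneg fun i hi => by linarith [ha1 i (hsub i hi)]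
    have hP1 : ∏ i ∈ range n, (1 - a i) ≤ 1 :=
      Finset.prod_le_one (fun i hi => by linarith [ha1 i (hsub i hi)])
        (fun i hi => by linarith [ha0 i (hsub i hi)])
    have hn0 := ha0 n (Finset.mem_range.2 (Nat.lt_succ_self n))
    have hn1 := ha1 n (Finset.mem_range.2 (Nat.lt_succ_self n))
    nlinarith

/-- Uniform positive lower bound on |(z;q)_n| when all values are nonzero. -/
lemma exists_lb {q z : ℂ} (hq : ‖q‖ < 1) (hne : ∀ n, qPoch q z n ≠ 0) :
    ∃ ε > 0, ∀ n, ε ≤ ‖qPoch q z n‖ := by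
  have hq0 : (0:ℝ) ≤ ‖q‖ := norm_nonneg q
  obtain ⟨N, hN⟩ : ∃ N : ℕ, ‖z‖ * ‖q‖ ^ N / (1 - ‖q‖) ≤ 1/2 := by
    have h := tendsto_pow_atTop_nhds_zero_of_lt_one hq0 hq
    have h2 : Filter.Tendsto (fun n : ℕ => ‖z‖ * ‖q‖ ^ n / (1 - ‖q‖))
        Filter.atTop (nhds 0) := by
      have := (h.const_mul (‖z‖)).div_const (1 - ‖q‖)
      simpa using this
    have := (h2.eventually (eventually_le_nhds (by norm_num : (0:ℝ) < 1/2))).exists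
    simpa using this
  set m : ℝ := (Finset.range (N+1)).inf' (by simp) (fun n => ‖qPoch q z n‖) with hm
  have hmpos : 0 < m := by
    rw [hm]
    apply (Finset.lt_inf'_iff _).2
    intro i _
    exact norm_pos_iff.mpr (hne i)
  have hmle : ∀ n ≤ N, m ≤ ‖qPoch q z n‖ := by
    intro n hn
    exact Finset.inf'_le _ (by simp [Nat.lt_succ_iff.2 hn])
  have hA : 0 < ‖qPoch q z N‖ := norm_pos_iff.mpr (hne N)
  refine ⟨min (m/2) (‖qPoch q z N‖ / 2), lt_min (by linarith) (by linarith),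
    fun n => ?_⟩
  rcases le_or_gt n N with h | h
  · calc min (m/2) _ ≤ m/2 := min_le_left _ _
      _ ≤ m := by linarith
      _ ≤ _ := hmle n h
  · obtain ⟨k, rfl⟩ : ∃ k, n = N + k := ⟨n - N, by omega⟩
    have key : qPoch q z (N + k) = qPoch q z N * ∏ i ∈ range k, (1 - z * q ^ (N + i)) := by
      rw [qPoch, qPoch, Finset.prod_range_add]
    rw [key, norm_mul]
    have htail : (1:ℝ)/2 ≤ ‖∏ i ∈ range k, (1 - z * q ^ (N + i))‖ := by
      rw [norm_prod]
      set a : ℕ → ℝ := fun i => ‖z‖ * ‖q‖ ^ (N + i) with ha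
      have ha0 : ∀ i, 0 ≤ a i := fun i => by positivity
      have hsum : ∑ i ∈ range k, a i ≤ 1/2 := by
        calc ∑ i ∈ range k, a i
            = ‖z‖ * ‖q‖ ^ N * ∑ i ∈ range k, ‖q‖ ^ i := by
              rw [Finset.mul_sum]
              exact Finset.sum_congr rfl fun i _ => by simp only [ha, pow_add]; ring
          _ ≤ ‖z‖ * ‖q‖ ^ N * (1 - ‖q‖)⁻¹ := by
              apply mul_le_mul_of_nonneg_left _ (by positivity)
              calc ∑ i ∈ range k, ‖q‖ ^ i ≤ ∑' i : ℕ, ‖q‖ ^ i :=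
                    Summable.sum_le_tsum _ (fun i _ => pow_nonneg hq0 i)
                      (summable_geometric_of_lt_one hq0 hq)
                _ = (1 - ‖q‖)⁻¹ := tsum_geometric_of_lt_one hq0 hq
          _ ≤ 1/2 := by rw [← div_eq_mul_inv]; exact hN
      have ha1 : ∀ i ∈ range k, a i ≤ 1 := by
        intro i hi
        rcases k with _ | k
        · simp at hi
        · calc a i ≤ ∑ j ∈ range (k+1), a j :=
                Finset.single_le_sum (fun j _ => ha0 j) hi
            _ ≤ 1/2 := hsum
            _ ≤ 1 := by norm_num
      calc (1:ℝ)/2 ≤ 1 - ∑ i ∈ range k, a i := by linarith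
        _ ≤ ∏ i ∈ range k, (1 - a i) := prod_one_sub_ge a k (fun i hi => ha0 i) ha1
        _ ≤ ∏ i ∈ range k, ‖1 - z * q ^ (N + i)‖ := by
            apply Finset.prod_le_prod
            · intro i hi; linarith [ha1 i hi]
            · intro i hi
              have : ‖(1:ℂ)‖ - ‖z * q ^ (N+i)‖ ≤ ‖1 - z * q ^ (N+i)‖ := by
                simpa using norm_sub_norm_le (1:ℂ) (z * q ^ (N+i))
              simpa [ha, norm_mul, norm_pow] using this
    calc min (m/2) (‖qPoch q z N‖/2) ≤ ‖qPoch q z N‖/2 := min_le_right _ _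
      _ = ‖qPoch q z N‖ * (1/2) := by ring
      _ ≤ ‖qPoch q z N‖ * ‖∏ i ∈ range k, (1 - z * q ^ (N + i))‖ := by
          apply mul_le_mul_of_nonneg_left htail (norm_nonneg _)

lemma summable_term {q q1 C : ℂ} (A B : ℂ) (hq1 : ‖q‖ < 1)
    (hq11 : ‖q1‖ < 1) (hC : ∀ n, qPoch q C n ≠ 0)
    {x y : ℂ} (hx : ‖x‖ < 1) (hy : ‖y‖ < 1) :
    Summable (fun p : ℕ × ℕ =>
      qPoch q A (p.1 + p.2) * qPoch q1 B p.1 /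
        (qPoch q C (p.1 + p.2) * qPoch q1 q1 p.1 * qPoch q q p.2) * x ^ p.1 * y ^ p.2) := by
  obtain ⟨ε₁, hε₁, hC1⟩ := exists_lb hq1 hC
  obtain ⟨ε₂, hε₂, hq1lb⟩ := exists_lb hq11 (qPoch_self_ne_zero hq11)
  obtain ⟨ε₃, hε₃, hqlb⟩ := exists_lb hq1 (qPoch_self_ne_zero hq1)
  set MA := Real.exp (‖A‖ / (1 - ‖q‖)) with hMA
  set MB := Real.exp (‖B‖ / (1 - ‖q1‖)) with hMB
  set K := MA * MB / (ε₁ * ε₂ * ε₃) with hK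
  have hsum : Summable (fun p : ℕ × ℕ => K * (‖x‖ ^ p.1 * ‖y‖ ^ p.2)) := by
    apply Summable.mul_left
    exact Summable.mul_of_nonneg
      (summable_geometric_of_lt_one (norm_nonneg x) hx)
      (summable_geometric_of_lt_one (norm_nonneg y) hy)
      (fun i => pow_nonneg (norm_nonneg x) i)
      (fun i => pow_nonneg (norm_nonneg y) i)
  apply Summable.of_norm_bounded hsum
  intro p
  rw [norm_mul, norm_mul, norm_div, norm_mul, norm_mul, norm_mul,
    norm_pow, norm_pow]
  rw [mul_assoc]
  have hden : ε₁ * ε₂ * ε₃ ≤ ‖qPoch q C (p.1 + p.2)‖ *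
      ‖qPoch q1 q1 p.1‖ * ‖qPoch q q p.2‖ := by
    apply mul_le_mul
    apply mul_le_mul (hC1 _) (hq1lb _) hε₂.le (norm_nonneg _)
    exact hqlb _
    exact hε₃.le
    exact mul_nonneg (norm_nonneg _) (norm_nonneg _)
  have hnum : ‖qPoch q A (p.1+p.2)‖ * ‖qPoch q1 B p.1‖ ≤ MA * MB := by
    apply mul_le_mul (abs_qPoch_le hq1 A _) (abs_qPoch_le hq11 B _)
      (norm_nonneg _) (Real.exp_nonneg _)
  have h1 : ‖qPoch q A (p.1+p.2)‖ * ‖qPoch q1 B p.1‖ /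
      (‖qPoch q C (p.1+p.2)‖ * ‖qPoch q1 q1 p.1‖ *
        ‖qPoch q q p.2‖) ≤ K := by
    rw [hK]
    exact div_le_div₀ (mul_nonneg (Real.exp_pos _).le (Real.exp_pos _).le) hnum
      (mul_pos (mul_pos hε₁ hε₂) hε₃) hden
  exact mul_le_mul_of_nonneg_right h1
    (mul_nonneg (pow_nonneg (norm_nonneg _) _) (pow_nonneg (norm_nonneg _) _))

lemma step (q q1 A B C x y : ℂ)
    (hq1 : ‖q‖ < 1) (hq11 : ‖q1‖ < 1)
    (hC : ∀ n, qPoch q C n ≠ 0)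
    (hx0 : x ≠ 0) (hx : ‖x‖ < 1) (hy : ‖y‖ < 1) :
    jackson q1 (fun t => Phi1 q q1 A B C t y) x =
      (1 - A) * (1 - B) / ((1 - q1) * (1 - C)) * Phi1 q q1 (q*A) (q1*B) (q*C) x y := by
  have hq1ne : (1 : ℂ) - q1 ≠ 0 := by
    intro h
    rw [sub_eq_zero] at h
    rw [← h] at hq11
    simp at hq11
  have hxq : ‖q1 * x‖ < 1 := by
    rw [norm_mul]
    nlinarith [norm_nonneg q1, norm_nonneg x]
  have h1 := summable_term (q := q) (q1 := q1) (C := C) A B hq1 hq11 hC hx hy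
  have h2 := summable_term (q := q) (q1 := q1) (C := C) A B hq1 hq11 hC hxq hy
  rw [jackson]
  simp only [Phi1]
  rw [← Summable.tsum_sub h1 h2, ← tsum_div_const]
  set F : ℕ × ℕ → ℂ := fun p =>
    (qPoch q A (p.1 + p.2) * qPoch q1 B p.1 /
        (qPoch q C (p.1 + p.2) * qPoch q1 q1 p.1 * qPoch q q p.2) * x ^ p.1 * y ^ p.2 -
      qPoch q A (p.1 + p.2) * qPoch q1 B p.1 /
        (qPoch q C (p.1 + p.2) * qPoch q1 q1 p.1 * qPoch q q p.2) * (q1 * x) ^ p.1 * y ^ p.2) /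
      ((1 - q1) * x) with hF
  have hinj : Function.Injective (fun p : ℕ × ℕ => (p.1 + 1, p.2)) := by
    intro a b h
    simp only [Prod.mk.injEq] at h
    exact Prod.ext (by omega) h.2
  have hsupp : Function.support F ⊆ Set.range (fun p : ℕ × ℕ => (p.1 + 1, p.2)) := by
    rintro ⟨ℓ, k⟩ hp
    rcases ℓ with _ | m
    · exfalso
      apply hp
      simp [hF]
    · exact ⟨(m, k), rfl⟩
  rw [← hinj.tsum_eq hsupp]
  rw [← tsum_mul_left]
  apply tsum_congr
  rintro ⟨ℓ, k⟩
  simp only [hF]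
  have hidx : ℓ + 1 + k = (ℓ + k) + 1 := by omega
  have hCsplit := (qPoch_succ' q C (ℓ + k)) ▸ hC ((ℓ + k) + 1)
  have h1C : (1 : ℂ) - C ≠ 0 := left_ne_zero_of_mul hCsplit
  have hCn : qPoch q (q * C) (ℓ + k) ≠ 0 := right_ne_zero_of_mul hCsplit
  have hq1split := (qPoch_succ q1 q1 ℓ) ▸ qPoch_self_ne_zero hq11 (ℓ + 1)
  have hq1p : qPoch q1 q1 ℓ ≠ 0 := left_ne_zero_of_mul hq1split
  have hfac : (1 : ℂ) - q1 * q1 ^ ℓ ≠ 0 := right_ne_zero_of_mul hq1split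
  have hqk : qPoch q q k ≠ 0 := qPoch_self_ne_zero hq1 k
  simp only [hidx, qPoch_succ' q A (ℓ + k), qPoch_succ' q C (ℓ + k),
    qPoch_succ q1 q1 ℓ, qPoch_succ' q1 B ℓ]
  field_simp
  ring

theorem stmt12 (q q1 A B C x y : ℂ)
    (hq0 : 0 < ‖q‖) (hq1 : ‖q‖ < 1)
    (hq10 : 0 < ‖q1‖) (hq11 : ‖q1‖ < 1)
    (hC : ∀ n : ℕ, qPoch q C n ≠ 0)
    (r : ℕ) (hx0 : 0 < ‖x‖) (hx : ‖x‖ < 1) (hy : ‖y‖ < 1) :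
    ((jackson q1)^[r] (fun t => Phi1 q q1 A B C t y)) x =
      qPoch q A r * qPoch q1 B r / ((1 - q1) ^ r * qPoch q C r) *
        Phi1 q q1 (q ^ r * A) (q1 ^ r * B) (q ^ r * C) x y := by
  have hq1ne0 : q1 ≠ 0 := norm_ne_zero_iff.1 hq10.ne'
  have hq1ne : (1 : ℂ) - q1 ≠ 0 := by
    intro h
    rw [sub_eq_zero] at h
    rw [← h] at hq11
    simp at hq11
  have main : ∀ r : ℕ, ∀ x : ℂ, x ≠ 0 → ‖x‖ < 1 →
      ((jackson q1)^[r] (fun t => Phi1 q q1 A B C t y)) x =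
        qPoch q A r * qPoch q1 B r / ((1 - q1) ^ r * qPoch q C r) *
          Phi1 q q1 (q ^ r * A) (q1 ^ r * B) (q ^ r * C) x y := by
    intro r
    induction r with
    | zero =>
      intro x hx0 hx
      simp [qPoch]
    | succ r ih =>
      intro x hx0 hx
      have hxq0 : q1 * x ≠ 0 := mul_ne_zero hq1ne0 hx0
      have hxq : ‖q1 * x‖ < 1 := by
        rw [norm_mul]
        nlinarith [norm_nonneg q1, norm_nonneg x]
      rw [Function.iterate_succ_apply', jackson, ih x hx0 hx, ih (q1 * x) hxq0 hxq]
      have hC' : ∀ n, qPoch q (q ^ r * C) n ≠ 0 := fun n =>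
        right_ne_zero_of_mul ((qPoch_add q C r n) ▸ hC (r + n))
      have hstep := step q q1 (q ^ r * A) (q1 ^ r * B) (q ^ r * C) x y hq1 hq11 hC' hx0 hx hy
      rw [jackson] at hstep
      set c := qPoch q A r * qPoch q1 B r / ((1 - q1) ^ r * qPoch q C r) with hc
      set Φ := fun t : ℂ => Phi1 q q1 (q ^ r * A) (q1 ^ r * B) (q ^ r * C) t y with hΦ
      have hrw : (c * Φ x - c * Φ (q1 * x)) / ((1 - q1) * x)
          = c * ((Φ x - Φ (q1 * x)) / ((1 - q1) * x)) := by
        rw [mul_sub] at *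
        ring
      rw [hrw, hstep]
      have hA' : q * (q ^ r * A) = q ^ (r+1) * A := by ring
      have hB' : q1 * (q1 ^ r * B) = q1 ^ (r+1) * B := by ring
      have hC'' : q * (q ^ r * C) = q ^ (r+1) * C := by ring
      rw [hA', hB', hC'', ← mul_assoc]
      congr 1
      rw [hc, qPoch_succ q A r, qPoch_succ q1 B r, qPoch_succ q C r, pow_succ,
        div_mul_div_comm]
      congr 1
      · ring
      · ring
  exact main r x (norm_ne_zero_iff.1 hx0.ne') hx
end
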